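/- The comprehension instance C^I := ∃P:ι→o. ∀X:ι. (P X ⟺ X ≐^ι X) is 16-cut-strong in the sequent calculus G_β: from derivations of Δ * C in n steps and Δ * ¬C in m steps (C a β-normal sentence) one obtains a derivation of Δ * ¬C^I — equivalently, since ∃ is defined via ¬ and Π, of Δ * C^I with the negated encoding — in at most n+m+16 steps. -/

import Mathlib

namespace CutSim

inductive Ty : Type
  | o : Ty
  | i : Ty
  | arr : Ty → Ty → Ty
  deriving DecidableEq

inductive Tm : Type
  | var : ℕ → Tm
  | param : ℕ → Ty → Tm
  | cnot : Tm
  | cor : Tm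
  | cpi : Ty → Tm
  | app : Tm → Tm → Tm
  | lam : Ty → Tm → Tm
  deriving DecidableEq

open Ty Tm

/-- negation ¬A -/
def NEG (A : Tm) : Tm := .app .cnot A
/-- disjunction A ∨ B -/
def OR (A B : Tm) : Tm := .app (.app .cor A) B
/-- Π^α F -/
def PI (a : Ty) (F : Tm) : Tm := .app (.cpi a) F
/-- implication A ⇒ B := ¬A ∨ B -/
def IMP (A B : Tm) : Tm := OR (NEG A) B
/-- equivalence A ⟺ B := ¬(¬(A⇒B) ∨ ¬(B⇒A)) -/
def IFF (A B : Tm) : Tm := NEG (OR (NEG (IMP A B)) (NEG (IMP B A)))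

/-- de Bruijn shifting: add d to all variables ≥ c -/
def shift (d c : ℕ) : Tm → Tm
  | .var n => if n < c then .var n else .var (n + d)
  | .param k a => .param k a
  | .cnot => .cnot
  | .cor => .cor
  | .cpi a => .cpi a
  | .app f x => .app (shift d c f) (shift d c x)
  | .lam a b => .lam a (shift d (c+1) b)

/-- capture-avoiding substitution of s for variable k -/
def subst (k : ℕ) (s : Tm) : Tm → Tm
  | .var n => if n = k then shift k 0 s else if k < n then .var (n-1) else .var n
  | .param m a => .param m a
  | .cnot => .cnot
  | .cor => .cor
  | .cpi a => .cpi a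
  | .app f x => .app (subst k s f) (subst k s x)
  | .lam a b => .lam a (subst (k+1) s b)

/-- simple typing relation -/
inductive HasTy : List Ty → Tm → Ty → Prop
  | var {Γ n a} : Γ[n]? = some a → HasTy Γ (.var n) a
  | param {Γ k a} : HasTy Γ (.param k a) a
  | cnot {Γ} : HasTy Γ .cnot (.arr .o .o)
  | cor {Γ} : HasTy Γ .cor (.arr .o (.arr .o .o))
  | cpi {Γ a} : HasTy Γ (.cpi a) (.arr (.arr a .o) .o)
  | app {Γ f x a b} : HasTy Γ f (.arr a b) → HasTy Γ x a → HasTy Γ (.app f x) b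
  | lam {Γ a B b} : HasTy (a :: Γ) B b → HasTy Γ (.lam a B) (.arr a b)

/-- a sentence is a closed formula of type o -/
def Sent (A : Tm) : Prop := HasTy [] A .o

/-- one-step β-reduction -/
inductive Beta : Tm → Tm → Prop
  | beta {a B s} : Beta (.app (.lam a B) s) (subst 0 s B)
  | appl {f f' x} : Beta f f' → Beta (.app f x) (.app f' x)
  | appr {f x x'} : Beta x x' → Beta (.app f x) (.app f x')
  | lam {a b b'} : Beta b b' → Beta (.lam a b) (.lam a b')

def BetaStar : Tm → Tm → Prop := Relation.ReflTransGen Beta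
def IsBetaNormal (A : Tm) : Prop := ∀ B, ¬ Beta A B
/-- B is the β-normal form of A -/
def BetaNF (A B : Tm) : Prop := BetaStar A B ∧ IsBetaNormal B
/-- β-equality (via confluence: common reduct) -/
def BetaEq (A B : Tm) : Prop := ∃ C, BetaStar A C ∧ BetaStar B C

def headIsLogical : Tm → Prop
  | .app f _ => headIsLogical f
  | .cnot => True
  | .cor => True
  | .cpi _ => True
  | _ => False

/-- atomic formula: β-normal, head not a logical constant -/
def Atomic (A : Tm) : Prop := IsBetaNormal A ∧ ¬ headIsLogical A

def OccursParam (k : ℕ) (a : Ty) : Tm → Prop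
  | .param m b => k = m ∧ a = b
  | .app f x => OccursParam k a f ∨ OccursParam k a x
  | .lam _ b => OccursParam k a b
  | _ => False

/-- β-normal sentence -/
def BNSent (C : Tm) : Prop := Sent C ∧ IsBetaNormal C

/-- The sequent calculus G_β, with the number of proof steps as index. -/
inductive Der : Finset Tm → ℕ → Prop
  | init {Δ : Finset Tm} {A} : Atomic A → Der (insert A (insert (NEG A) Δ)) 1
  | negI {Δ : Finset Tm} {A n} : Der (insert A Δ) n → Der (insert (NEG (NEG A)) Δ) (n+1)
  | orL {Δ : Finset Tm} {A B n m} : Der (insert (NEG A) Δ) n → Der (insert (NEG B) Δ) m →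
      Der (insert (NEG (OR A B)) Δ) (n+m+1)
  | orR {Δ : Finset Tm} {A B n} : Der (insert A (insert B Δ)) n → Der (insert (OR A B) Δ) (n+1)
  | piL {Δ : Finset Tm} {a F C D n} : HasTy [] C a → BetaNF (.app F C) D →
      Der (insert (NEG D) Δ) n → Der (insert (NEG (PI a F)) Δ) (n+1)
  | piR {Δ : Finset Tm} {a F c D n} : BetaNF (.app F (.param c a)) D →
      (∀ B ∈ insert (PI a F) Δ, ¬ OccursParam c a B) →
      Der (insert D Δ) n → Der (insert (PI a F) Δ) (n+1)

/-- A is k-cut-strong for G_β -/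
def CutStrong (k : ℕ) (A : Tm) : Prop :=
  ∀ (Δ : Finset Tm) (C : Tm) (n m : ℕ), BNSent C →
    Der (insert C Δ) n → Der (insert (NEG C) Δ) m →
    ∃ s ≤ n + m + k, Der (insert (NEG A) Δ) s

/-- Leibniz equality M ≐^α N := Π^{α→o}(λP. ¬(P M) ∨ (P N)) -/
def leib (a : Ty) (M N : Tm) : Tm :=
  PI (.arr a .o) (.lam (.arr a .o)
    (OR (NEG (.app (.var 0) (shift 1 0 M))) (.app (.var 0) (shift 1 0 N))))

/-- comprehension instance C^I := ∃P:ι→o. ∀X:ι. (P X ⟺ X ≐^ι X),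
    where ∃X:γ.F := ¬Π^γ(λX.¬F) -/
def CompInst : Tm :=
  NEG (PI (.arr .i .o) (.lam (.arr .i .o)
    (NEG (PI .i (.lam .i
      (IFF (.app (.var 1) (.var 0)) (leib .i (.var 0) (.var 0))))))))

section Aux
open Ty Tm

@[simp] lemma shift_zero (c : ℕ) (t : Tm) : shift 0 c t = t := by
  induction t generalizing c <;> simp [shift, *]

lemma hasTy_append {Γ t a} (h : HasTy Γ t a) (Γ' : List Ty) : HasTy (Γ ++ Γ') t a := by
  induction h with
  | @var Γ n b h =>
    obtain ⟨hn, -⟩ := List.getElem?_eq_some_iff.mp h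
    exact .var (by rw [List.getElem?_append_left hn]; exact h)
  | param => exact .param
  | cnot => exact .cnot
  | cor => exact .cor
  | cpi => exact .cpi
  | app hf hx ihf ihx => exact .app ihf ihx
  | lam hb ih => exact .lam ih

lemma subst_closed {Γ t a} (h : HasTy Γ t a) : ∀ k s, Γ.length ≤ k → subst k s t = t := by
  induction h with
  | @var Γ n b h =>
    intro k s hk
    obtain ⟨hn, -⟩ := List.getElem?_eq_some_iff.mp h
    have h1 : ¬ (n = k) := by omega
    have h2 : ¬ (k < n) := by omega
    simp [subst, h1, h2]
  | app hf hx ihf ihx => intro k s hk; simp [subst, ihf k s hk, ihx k s hk]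
  | lam hb ih => intro k s hk; simp [subst, ih (k+1) s (by simpa using Nat.succ_le_succ hk)]
  | _ => intro k s hk; rfl
end Aux
section Aux2
open Ty Tm

def isLamB : Tm → Bool
  | .lam _ _ => true
  | _ => false

def noRedex : Tm → Bool
  | .app f x => !(isLamB f) && noRedex f && noRedex x
  | .lam _ b => noRedex b
  | _ => true

lemma noRedex_beta {t u : Tm} (h : Beta t u) : noRedex t = false := by
  induction h with
  | beta => simp [noRedex, isLamB]
  | appl h ih => simp [noRedex, ih]
  | appr h ih => simp [noRedex, ih]
  | lam h ih => simp [noRedex, ih]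

lemma noRedex_normal {t : Tm} (h : noRedex t = true) : IsBetaNormal t :=
  fun _ hb => by simp [noRedex_beta hb] at h

lemma isBetaNormal_or_neg {C : Tm} (hC : IsBetaNormal C) : IsBetaNormal (OR (NEG C) C) := by
  intro B hB
  have hB' : Beta (.app (.app .cor (.app .cnot C)) C) B := hB
  cases hB' with
  | appr h => exact hC _ h
  | appl h =>
    cases h with
    | appl h => cases h
    | appr h =>
      cases h with
      | appl h => cases h
      | appr h => exact hC _ h

-- parameter swapping
def swIdx (c d k : ℕ) : ℕ := if k = c then d else if k = d then c else k

@[simp] lemma swIdx_swIdx (c d k : ℕ) : swIdx c d (swIdx c d k) = k := by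
  unfold swIdx; split_ifs <;> omega

def sw (c d : ℕ) (a : Ty) : Tm → Tm
  | .var n => .var n
  | .param k b => .param (if b = a then swIdx c d k else k) b
  | .cnot => .cnot
  | .cor => .cor
  | .cpi b => .cpi b
  | .app f x => .app (sw c d a f) (sw c d a x)
  | .lam b t => .lam b (sw c d a t)

@[simp] lemma sw_sw (c d : ℕ) (a : Ty) (t : Tm) : sw c d a (sw c d a t) = t := by
  induction t with
  | param k b => by_cases h : b = a <;> simp [sw, h]
  | _ => simp [sw, *]

lemma sw_shift (c d : ℕ) (a : Ty) (e j : ℕ) (t : Tm) :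
    sw c d a (shift e j t) = shift e j (sw c d a t) := by
  induction t generalizing j with
  | var n => by_cases h : n < j <;> simp [shift, sw, h]
  | _ => simp [shift, sw, *]

lemma sw_subst (c d : ℕ) (a : Ty) (k : ℕ) (s t : Tm) :
    sw c d a (subst k s t) = subst k (sw c d a s) (sw c d a t) := by
  induction t generalizing k with
  | var n =>
    rcases Nat.lt_trichotomy n k with h | h | h
    · have h1 : ¬ n = k := by omega
      have h2 : ¬ k < n := by omega
      simp [subst, sw, h1, h2]
    · simp [subst, sw, h, sw_shift]
    · have h1 : ¬ n = k := by omega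
      simp [subst, sw, h1, h]
  | _ => simp [subst, sw, *]

lemma sw_beta {t u : Tm} (c d : ℕ) (a : Ty) (h : Beta t u) :
    Beta (sw c d a t) (sw c d a u) := by
  induction h with
  | @beta b B s =>
    have : sw c d a (subst 0 s B) = subst 0 (sw c d a s) (sw c d a B) := sw_subst ..
    rw [show sw c d a (.app (.lam b B) s) = .app (.lam b (sw c d a B)) (sw c d a s) from rfl, this]
    exact Beta.beta
  | appl h ih => exact Beta.appl ih
  | appr h ih => exact Beta.appr ih
  | lam h ih => exact Beta.lam ih

lemma sw_betaStar {t u : Tm} (c d : ℕ) (a : Ty) (h : BetaStar t u) :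
    BetaStar (sw c d a t) (sw c d a u) :=
  Relation.ReflTransGen.lift (sw c d a) (fun _ _ hb => sw_beta c d a hb) _ _ h

lemma sw_normal {t : Tm} (c d : ℕ) (a : Ty) (h : IsBetaNormal t) :
    IsBetaNormal (sw c d a t) := by
  intro u hu
  have := sw_beta c d a hu
  rw [sw_sw] at this
  exact h _ this

lemma sw_betaNF {t u : Tm} (c d : ℕ) (a : Ty) (h : BetaNF t u) :
    BetaNF (sw c d a t) (sw c d a u) :=
  ⟨sw_betaStar c d a h.1, sw_normal c d a h.2⟩

lemma sw_hasTy {Γ t b} (c d : ℕ) (a : Ty) (h : HasTy Γ t b) : HasTy Γ (sw c d a t) b := by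
  induction h with
  | var h => exact .var h
  | param => exact .param
  | cnot => exact .cnot
  | cor => exact .cor
  | cpi => exact .cpi
  | app hf hx ihf ihx => exact .app ihf ihx
  | lam hb ih => exact .lam ih

lemma headIsLogical_sw {t : Tm} (c d : ℕ) (a : Ty) :
    headIsLogical (sw c d a t) ↔ headIsLogical t := by
  induction t <;> simp [sw, headIsLogical, *]

lemma sw_atomic {t : Tm} (c d : ℕ) (a : Ty) (h : Atomic t) : Atomic (sw c d a t) :=
  ⟨sw_normal c d a h.1, fun hh => h.2 ((headIsLogical_sw c d a).mp hh)⟩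

lemma occurs_sw (e : ℕ) (b : Ty) (c d : ℕ) (a : Ty) (t : Tm) :
    OccursParam e b (sw c d a t) ↔ OccursParam (if b = a then swIdx c d e else e) b t := by
  induction t with
  | param k b' =>
    simp only [sw, OccursParam]
    by_cases hb : b = b'
    · subst hb
      simp only [eq_self_iff_true, and_true]
      by_cases h : b = a
      · subst h
        simp only [eq_self_iff_true, if_true]
        exact ⟨fun he => by rw [he, swIdx_swIdx], fun he => by rw [← he, swIdx_swIdx]⟩
      · simp [h]
    · simp [hb]
  | app f x ihf ihx => simp [sw, OccursParam, ihf, ihx]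
  | lam b' t ih => simp [sw, OccursParam, ih]
  | _ => simp [sw, OccursParam]

lemma sw_id_of_not_occurs {t : Tm} {c d : ℕ} {a : Ty}
    (h1 : ¬ OccursParam c a t) (h2 : ¬ OccursParam d a t) : sw c d a t = t := by
  induction t with
  | param k b =>
    by_cases hb : b = a
    · subst hb
      have hc : k ≠ c := fun h => h1 ⟨h.symm, rfl⟩
      have hd : k ≠ d := fun h => h2 ⟨h.symm, rfl⟩
      simp [sw, swIdx, hc, hd]
    · simp [sw, hb]
  | app f x ihf ihx =>
    simp only [OccursParam, not_or] at h1 h2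
    simp [sw, ihf h1.1 h2.1, ihx h1.2 h2.2]
  | lam b t ih =>
    simp only [OccursParam] at h1 h2
    simp [sw, ih h1 h2]
  | _ => rfl

end Aux2
section Aux3
open Ty Tm

def pbound : Tm → ℕ
  | .param k _ => k + 1
  | .app f x => max (pbound f) (pbound x)
  | .lam _ b => pbound b
  | _ => 0

lemma occurs_lt_pbound {k : ℕ} {a : Ty} {t : Tm} (h : OccursParam k a t) : k < pbound t := by
  induction t with
  | param m b => obtain ⟨rfl, -⟩ := h; simp [pbound]
  | app f x ihf ihx =>
    rcases h with h | h
    · exact lt_of_lt_of_le (ihf h) (le_max_left _ _)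
    · exact lt_of_lt_of_le (ihx h) (le_max_right _ _)
  | lam b t ih => exact ih h
  | _ => exact absurd h (by simp [OccursParam])

lemma fresh_exists (S : Finset Tm) : ∃ c, ∀ B ∈ S, ∀ a, ¬ OccursParam c a B := by
  refine ⟨S.sup pbound, fun B hB a h => ?_⟩
  have h1 := occurs_lt_pbound h
  have h2 : pbound B ≤ S.sup pbound := Finset.le_sup hB
  omega

lemma occurs_PI {c : ℕ} {b a : Ty} {F : Tm} :
    OccursParam c b (PI a F) ↔ OccursParam c b F := by
  simp [PI, OccursParam]

lemma der_sw {Δ : Finset Tm} {n : ℕ} (c d : ℕ) (a : Ty) (h : Der Δ n) :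
    Der (Δ.image (sw c d a)) n := by
  induction h with
  | @init Δ A hA =>
    rw [show (insert A (insert (NEG A) Δ)).image (sw c d a)
        = insert (sw c d a A) (insert (NEG (sw c d a A)) (Δ.image (sw c d a))) by
      simp [Finset.image_insert]; rfl]
    exact Der.init (sw_atomic c d a hA)
  | @negI Δ A n h ih =>
    rw [Finset.image_insert] at ih ⊢
    exact Der.negI ih
  | @orL Δ A B n m h1 h2 ih1 ih2 =>
    rw [Finset.image_insert] at ih1 ih2 ⊢
    exact Der.orL ih1 ih2
  | @orR Δ A B n h ih =>
    rw [Finset.image_insert, Finset.image_insert] at ih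
    rw [Finset.image_insert]
    exact Der.orR ih
  | @piL Δ b F C D n hty hnf h ih =>
    rw [Finset.image_insert] at ih ⊢
    exact Der.piL (sw_hasTy c d a hty) (sw_betaNF c d a hnf) ih
  | @piR Δ b F e D n hnf hfresh h ih =>
    rw [Finset.image_insert] at ih ⊢
    have hnf' : BetaNF (.app (sw c d a F) (.param (if b = a then swIdx c d e else e) b))
        (sw c d a D) := by
      have := sw_betaNF c d a hnf
      rwa [show sw c d a (.app F (.param e b)) =
        .app (sw c d a F) (.param (if b = a then swIdx c d e else e) b) from rfl] at this
    refine Der.piR hnf' ?_ ih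
    intro B hB
    have key : (if b = a then swIdx c d (if b = a then swIdx c d e else e)
        else (if b = a then swIdx c d e else e)) = e := by
      by_cases hba : b = a <;> simp [hba]
    rcases Finset.mem_insert.mp hB with hB | hB
    · subst hB
      rw [show (PI b (sw c d a F)) = sw c d a (PI b F) from rfl, occurs_sw, key]
      exact hfresh _ (Finset.mem_insert_self _ _)
    · obtain ⟨B₀, hB₀, rfl⟩ := Finset.mem_image.mp hB
      rw [occurs_sw, key]
      exact hfresh _ (Finset.mem_insert_of_mem hB₀)

end Aux3
section Aux4
open Ty Tm

lemma der_weaken : ∀ (n : ℕ) (Δ : Finset Tm), Der Δ n → ∀ X, Der (insert X Δ) n := by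
  intro n
  induction n using Nat.strong_induction_on with
  | _ n ih =>
    intro Δ h X
    cases h with
    | @init Δ' A hA =>
      rw [Finset.insert_comm, Finset.insert_comm X]
      exact Der.init hA
    | @negI Δ' A k h =>
      rw [Finset.insert_comm]
      exact Der.negI (by rw [Finset.insert_comm]; exact ih k (by omega) _ h X)
    | @orL Δ' A B k l h1 h2 =>
      rw [Finset.insert_comm]
      exact Der.orL (by rw [Finset.insert_comm]; exact ih k (by omega) _ h1 X)
        (by rw [Finset.insert_comm]; exact ih l (by omega) _ h2 X)
    | @orR Δ' A B k h =>
      rw [Finset.insert_comm]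
      refine Der.orR ?_
      have hw := ih k (by omega) _ h X
      rw [Finset.insert_comm X A, Finset.insert_comm X B] at hw
      exact hw
    | @piL Δ' b F Cw D k hty hnf h =>
      rw [Finset.insert_comm]
      exact Der.piL hty hnf (by rw [Finset.insert_comm]; exact ih k (by omega) _ h X)
    | @piR Δ' b F e D k hnf hfresh h =>
      obtain ⟨e', he'⟩ := fresh_exists (insert X (insert (PI b F) (insert (.param e b) Δ')))
      have heX : ∀ a, ¬ OccursParam e' a X := he' X (by simp)
      have hePI : ∀ a, ¬ OccursParam e' a (PI b F) := he' _ (by simp)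
      have heF : ¬ OccursParam e' b F := fun hh => hePI b (occurs_PI.mpr hh)
      have heΔ : ∀ B ∈ Δ', ∀ a, ¬ OccursParam e' a B := fun B hB => he' B (by simp [hB])
      have hsw := der_sw e e' b h
      rw [Finset.image_insert] at hsw
      have hΔelt : ∀ B ∈ Δ', sw e e' b B = B := fun B hB =>
        sw_id_of_not_occurs (hfresh B (Finset.mem_insert_of_mem hB)) (heΔ B hB b)
      have hΔid : Δ'.image (sw e e' b) = Δ' := by
        have hfun : Set.EqOn (sw e e' b) id ↑Δ' := fun B hB => hΔelt B (Finset.mem_coe.mp hB)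
        rw [Finset.image_congr hfun, Finset.image_id]
      have hFid : sw e e' b F = F :=
        sw_id_of_not_occurs
          (fun hh => (hfresh _ (Finset.mem_insert_self _ _)) (occurs_PI.mpr hh)) heF
      have hnf' : BetaNF (.app F (.param e' b)) (sw e e' b D) := by
        have hx := sw_betaNF e e' b hnf
        rwa [show sw e e' b (.app F (.param e b)) = .app F (.param e' b) by
          show Tm.app (sw e e' b F) (Tm.param (if b = b then swIdx e e' e else e) b)
              = Tm.app F (Tm.param e' b)
          rw [hFid]; simp [swIdx]] at hx
      rw [hΔid] at hsw
      have hw := ih k (by omega) _ hsw X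
      rw [Finset.insert_comm] at hw
      rw [Finset.insert_comm]
      refine Der.piR hnf' ?_ hw
      intro B hB
      rcases Finset.mem_insert.mp hB with rfl | hB
      · exact hePI b
      rcases Finset.mem_insert.mp hB with rfl | hB
      · exact heX b
      · exact heΔ B hB b

end Aux4
section Main
open Ty Tm

def a0 : Tm := .param 0 .i

def F0 : Tm := .lam (.arr .i .o)
  (NEG (PI .i (.lam .i (IFF (.app (.var 1) (.var 0)) (leib .i (.var 0) (.var 0))))))

def Gp (p : ℕ) : Tm :=
  .lam .i (IFF (.app (.param p (.arr .i .o)) (.var 0)) (leib .i (.var 0) (.var 0)))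

def H0 : Tm := .lam (.arr .i .o) (OR (NEG (.app (.var 0) a0)) (.app (.var 0) a0))

lemma CompInst_eq : CompInst = NEG (PI (.arr .i .o) F0) := rfl

lemma Q0_eq : leib .i a0 a0 = PI (.arr .i .o) H0 := rfl

lemma nf1 (p : ℕ) : BetaNF (.app F0 (.param p (.arr .i .o))) (NEG (PI .i (Gp p))) :=
  ⟨Relation.ReflTransGen.single Beta.beta, noRedex_normal rfl⟩

lemma nf2 (p : ℕ) : BetaNF (.app (Gp p) a0)
    (IFF (.app (.param p (.arr .i .o)) a0) (leib .i a0 a0)) :=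
  ⟨Relation.ReflTransGen.single Beta.beta, noRedex_normal rfl⟩

lemma nf3 (q : ℕ) : BetaNF (.app H0 (.param q (.arr .i .o)))
    (OR (NEG (.app (.param q (.arr .i .o)) a0)) (.app (.param q (.arr .i .o)) a0)) :=
  ⟨Relation.ReflTransGen.single Beta.beta, noRedex_normal rfl⟩

lemma nf4 (C : Tm) (hty : HasTy [] C .o) (hnorm : IsBetaNormal C) :
    BetaNF (.app H0 (.lam .i C)) (OR (NEG C) C) := by
  constructor
  · have e1 : subst 0 (Tm.lam .i C) (OR (NEG (.app (.var 0) a0)) (.app (.var 0) a0))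
        = OR (NEG (.app (.lam .i C) a0)) (.app (.lam .i C) a0) := by
      simp [subst, OR, NEG, a0]
    have s1 : Beta (.app H0 (.lam .i C))
        (OR (NEG (.app (.lam .i C) a0)) (.app (.lam .i C) a0)) := by
      have := Beta.beta (a := .arr .i .o) (B := OR (NEG (.app (.var 0) a0)) (.app (.var 0) a0))
        (s := Tm.lam .i C)
      rw [e1] at this
      exact this
    have redC : Beta (.app (.lam .i C) a0) C := by
      have hs : subst 0 a0 C = C := subst_closed hty 0 a0 (by simp)
      have := Beta.beta (a := .i) (B := C) (s := a0)
      rwa [hs] at this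
    have s2 : Beta (OR (NEG (.app (.lam .i C) a0)) (.app (.lam .i C) a0))
        (OR (NEG C) (.app (.lam .i C) a0)) := Beta.appl (Beta.appr (Beta.appr redC))
    have s3 : Beta (OR (NEG C) (.app (.lam .i C) a0)) (OR (NEG C) C) := Beta.appr redC
    exact Relation.ReflTransGen.head s1
      (Relation.ReflTransGen.head s2 (Relation.ReflTransGen.single s3))
  · exact isBetaNormal_or_neg hnorm

lemma derQ (Γ : Finset Tm) : Der (insert (leib .i a0 a0) Γ) 3 := by
  obtain ⟨q, hq⟩ := fresh_exists (insert (PI (.arr .i .o) H0) Γ)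
  have hat : Atomic (.app (.param q (.arr .i .o)) a0) := ⟨noRedex_normal rfl, fun h => h⟩
  have d1 : Der (insert (NEG (.app (.param q (.arr .i .o)) a0))
      (insert (.app (.param q (.arr .i .o)) a0) Γ)) 1 := by
    have := Der.init (Δ := Γ) hat
    rwa [Finset.insert_comm] at this
  have d2 := Der.orR d1
  exact Der.piR (nf3 q) (fun B hB => hq B hB _) d2
end Main

/-- the comprehension instance C^I is 16-cut-strong in G_β -/
theorem stmt19 : CutStrong 16 CompInst := by
  intro Δ C n m hC hn hm
  obtain ⟨hty, hnorm⟩ := hC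
  obtain ⟨p, hp⟩ := fresh_exists (insert (PI (.arr .i .o) F0) Δ)
  have hLC : HasTy [] (.lam .i C) (.arr .i .o) := HasTy.lam (hasTy_append hty [.i])
  -- abbreviations
  set P : Tm := .app (.param p (.arr .i .o)) a0 with hP
  set Q : Tm := leib .i a0 a0 with hQ
  -- branch A : ¬¬P, ¬(¬Q ∨ P), Δ
  have dA1 : Der (insert (NEG (NEG Q)) (insert P Δ)) 4 := Der.negI (derQ _)
  have dA2 : Der (insert (NEG P) (insert P Δ)) 1 := by
    have := Der.init (Δ := Δ) (A := P) ⟨noRedex_normal rfl, fun h => h⟩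
    rwa [Finset.insert_comm] at this
  have dA' := Der.orL dA1 dA2
  have dA : Der (insert (NEG (NEG P)) (insert (NEG (OR (NEG Q) P)) Δ)) 7 := by
    apply Der.negI
    rw [Finset.insert_comm]
    exact dA'
  -- branch B : ¬Q, ¬(¬Q ∨ P), Δ  (cut simulation)
  have dw1 : Der (insert C (insert (NEG (OR (NEG Q) P)) Δ)) n := by
    have := der_weaken _ _ hn (NEG (OR (NEG Q) P))
    rwa [Finset.insert_comm] at this
  have dw2 : Der (insert (NEG C) (insert (NEG (OR (NEG Q) P)) Δ)) m := by
    have := der_weaken _ _ hm (NEG (OR (NEG Q) P))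
    rwa [Finset.insert_comm] at this
  have dB1 := Der.negI dw1
  have dB2 := Der.orL dB1 dw2
  have dB3 : Der (insert (NEG (PI (.arr .i .o) H0)) (insert (NEG (OR (NEG Q) P)) Δ))
      (n + 1 + m + 1 + 1) := Der.piL hLC (nf4 C hty hnorm) dB2
  -- combine
  have dT5 := Der.orL dA dB3
  have dT4 := Der.orR (show Der (insert (NEG (IMP P Q))
    (insert (NEG (IMP Q P)) Δ)) (7 + (n + 1 + m + 1 + 1) + 1) from dT5)
  have dT3 := Der.negI dT4
  have dT2 := Der.piL (show HasTy [] a0 .i from HasTy.param) (nf2 p)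
    (show Der (insert (NEG (IFF P Q)) Δ) _ from dT3)
  have dT1 := Der.piR (nf1 p) (fun B hB => hp B hB _)
    (show Der (insert (NEG (PI .i (Gp p))) Δ) _ from dT2)
  have dT0 : Der (insert (NEG CompInst) Δ)
      (7 + (n + 1 + m + 1 + 1) + 1 + 1 + 1 + 1 + 1 + 1) := Der.negI dT1
  exact ⟨_, by omega, dT0⟩


end CutSim
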